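/- Let a: ℝ → ℝ be C¹ with a ≥ c > 0 and let f be continuous. Suppose U₀: ℝ → ℝ is C² and solves (a(U₀) U₀')' + f(U₀) = 0 on ℝ with U₀' > 0, U₀(−∞) = α₋, U₀'(±∞) = 0, and define A(s) = ∫_{α₋}^s a(t)dt and W(u) = −2∫_{α₋}^u a(s)f(s)ds. Then (A(U₀(z)))' = √(W(U₀(z))) for all z ∈ ℝ, i.e., a(U₀)U₀' = √(W(U₀)). -/

import Mathlib

open MeasureTheory intervalIntegral Filter

/-- First-integral identity for the traveling profile:
a(U₀)U₀' = √(W(U₀)) where W(u) = −2∫_{α₋}^u a f. -/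
theorem stmt9 (a f : ℝ → ℝ) (c αm αp : ℝ) (hc : 0 < c) (hαs : αm < αp)
    (ha : ContDiff ℝ 1 a) (hac : ∀ s, c ≤ a s) (hf : Continuous f)
    (U₀ : ℝ → ℝ) (hU₀ : ContDiff ℝ 2 U₀)
    (hODE : ∀ z, HasDerivAt (fun z' => a (U₀ z') * deriv U₀ z') (-(f (U₀ z))) z)
    (hU₀' : ∀ z, 0 < deriv U₀ z)
    (hbot : Tendsto U₀ atBot (nhds αm)) (htop : Tendsto U₀ atTop (nhds αp))
    (hflatbot : Tendsto (fun z => a (U₀ z) * deriv U₀ z) atBot (nhds 0))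
    (hflattop : Tendsto (fun z => a (U₀ z) * deriv U₀ z) atTop (nhds 0))
    (A W : ℝ → ℝ)
    (hA : ∀ s, A s = ∫ t in αm..s, a t)
    (hW : ∀ u, W u = -2 * ∫ s in αm..u, a s * f s) :
    ∀ z, a (U₀ z) * deriv U₀ z = Real.sqrt (W (U₀ z)) := by
  set g : ℝ → ℝ := fun z => a (U₀ z) * deriv U₀ z with hg
  have hUdiff : ∀ z, HasDerivAt U₀ (deriv U₀ z) z := fun z =>
    ((hU₀.differentiable (by norm_num)) z).hasDerivAt
  have hWfun : W = fun u => -2 * ∫ s in αm..u, a s * f s := funext hW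
  have hWder : ∀ u, HasDerivAt W (-2 * (a u * f u)) u := by
    intro u
    have hcont : Continuous (fun s => a s * f s) := ha.continuous.mul hf
    have h1 := (hcont.integral_hasStrictDerivAt αm u).hasDerivAt
    have h2 := h1.const_mul (-2 : ℝ)
    rw [hWfun]
    exact h2
  have hh : ∀ z, HasDerivAt (fun z => (g z)^2 - W (U₀ z)) 0 z := by
    intro z
    have h1 : HasDerivAt (fun z => (g z)^2)
        ((2:ℕ) * g z ^ 1 * (-(f (U₀ z)))) z := (hODE z).pow 2
    have h2 : HasDerivAt (fun z => W (U₀ z))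
        ((-2 * (a (U₀ z) * f (U₀ z))) * deriv U₀ z) z :=
      (hWder (U₀ z)).comp z (hUdiff z)
    have h3 := h1.sub h2
    convert h3 using 1
    · rfl
    · rfl
    · rfl
    simp only [hg]
    push_cast
    ring
  have hdiff : Differentiable ℝ (fun z => (g z)^2 - W (U₀ z)) :=
    fun z => (hh z).differentiableAt
  have hzero : ∀ z, (g z)^2 - W (U₀ z) = 0 := by
    intro z
    have hconst : ∀ w, (g w)^2 - W (U₀ w) = (g z)^2 - W (U₀ z) := fun w =>
      is_const_of_deriv_eq_zero hdiff (fun x => (hh x).deriv) w z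
    have hlim1 : Tendsto (fun w => (g w)^2 - W (U₀ w)) atBot
        (nhds ((g z)^2 - W (U₀ z))) := by
      rw [tendsto_congr hconst]
      exact tendsto_const_nhds
    have hlim2 : Tendsto (fun w => (g w)^2 - W (U₀ w)) atBot (nhds 0) := by
      have hg2 : Tendsto (fun w => (g w)^2) atBot (nhds 0) := by
        simpa using hflatbot.pow 2
      have hWU : Tendsto (fun w => W (U₀ w)) atBot (nhds (W αm)) :=
        ((hWder αm).continuousAt.tendsto).comp hbot
      have hWαm : W αm = 0 := by simp [hW]
      simpa [hWαm] using hg2.sub hWU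
    exact tendsto_nhds_unique hlim1 hlim2
  intro z
  have hgpos : 0 < g z := mul_pos (lt_of_lt_of_le hc (hac _)) (hU₀' z)
  have hWg : W (U₀ z) = (g z)^2 := by linarith [hzero z]
  show g z = Real.sqrt (W (U₀ z))
  rw [hWg, Real.sqrt_sq hgpos.le]
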